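/- For α ≠ 0 with fixed square root α^{1/2}, and any complex z, ξ, the k-th derivative of the entire function f(z) = exp(αz² + ξz) satisfies f^{(k)}(z) = (−i)^k · α^{k/2} · H_k( i·α^{1/2}·z + i·ξ/(2α^{1/2}) ) · exp(αz² + ξz), where H_k is the physicists' Hermite polynomial. -/

import Mathlib

open Complex

noncomputable def Hc : ℕ → ℂ → ℂ
  | 0, _ => 1
  | 1, x => 2 * x
  | (n + 2), x => 2 * x * Hc (n + 1) x - 2 * (n + 1) * Hc n x

lemma Hc_succ (k : ℕ) (x : ℂ) :
    Hc (k + 1) x = 2 * x * Hc k x - 2 * (k : ℂ) * Hc (k - 1) x := by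
  cases k with
  | zero => simp [Hc]
  | succ n => simp [Hc]

lemma Hc_hasDerivAt : ∀ (k : ℕ) (x : ℂ), HasDerivAt (Hc k) (2 * (k : ℂ) * Hc (k - 1) x) x
  | 0, x => by
      have h : Hc 0 = fun _ : ℂ => (1 : ℂ) := by funext y; simp [Hc]
      rw [h]
      simpa using hasDerivAt_const x (1 : ℂ)
  | 1, x => by
      have h : Hc 1 = fun y : ℂ => 2 * y := by funext y; simp [Hc]
      rw [h]
      simpa [Hc] using (hasDerivAt_id x).const_mul (2 : ℂ)
  | (n + 2), x => by
      have h : Hc (n + 2) = fun y : ℂ =>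
          2 * y * Hc (n + 1) y - 2 * ((n : ℂ) + 1) * Hc n y := by
        funext y; simp [Hc]
      rw [h]
      have h1 := Hc_hasDerivAt (n + 1) x
      have h2 := Hc_hasDerivAt n x
      have hy : HasDerivAt (fun y : ℂ => 2 * y) (2 : ℂ) x := by
        simpa using (hasDerivAt_id x).const_mul (2 : ℂ)
      have := (hy.mul h1).sub (h2.const_mul (2 * ((n : ℂ) + 1)))
      convert this using 1
      · rfl
      · rfl
      · rfl
      rw [show n + 2 - 1 = n + 1 from rfl]
      simp only [Nat.add_sub_cancel]
      rw [Hc_succ n x]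
      push_cast
      ring

theorem stmt18 (α ξ s : ℂ) (hα : α ≠ 0) (hs : s ^ 2 = α) (k : ℕ) (z : ℂ) :
    iteratedDeriv k (fun u : ℂ => Complex.exp (α * u ^ 2 + ξ * u)) z =
      (-Complex.I) ^ k * s ^ k *
        Hc k (Complex.I * s * z + Complex.I * ξ / (2 * s)) *
        Complex.exp (α * z ^ 2 + ξ * z) := by
  have hs0 : s ≠ 0 := by
    intro h; apply hα; rw [← hs, h]; ring
  induction k generalizing z with
  | zero => simp [Hc]
  | succ k ih =>
    rw [iteratedDeriv_succ]
    have hfun : iteratedDeriv k (fun u : ℂ => Complex.exp (α * u ^ 2 + ξ * u)) =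
        fun z => (-Complex.I) ^ k * s ^ k *
          Hc k (Complex.I * s * z + Complex.I * ξ / (2 * s)) *
          Complex.exp (α * z ^ 2 + ξ * z) := funext ih
    rw [hfun]
    -- derivative of inner affine map
    have hw : HasDerivAt (fun z : ℂ => Complex.I * s * z + Complex.I * ξ / (2 * s))
        (Complex.I * s) z := by
      simpa using ((hasDerivAt_id z).const_mul (Complex.I * s)).add_const
        (Complex.I * ξ / (2 * s))
    have hH : HasDerivAt (fun z : ℂ => Hc k (Complex.I * s * z + Complex.I * ξ / (2 * s)))
        (2 * (k : ℂ) * Hc (k - 1) (Complex.I * s * z + Complex.I * ξ / (2 * s)) *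
          (Complex.I * s)) z :=
      (Hc_hasDerivAt k _).comp z hw
    have hE : HasDerivAt (fun z : ℂ => Complex.exp (α * z ^ 2 + ξ * z))
        (Complex.exp (α * z ^ 2 + ξ * z) * (α * (2 * z) + ξ)) z := by
      have : HasDerivAt (fun z : ℂ => α * z ^ 2 + ξ * z) (α * (2 * z) + ξ) z := by
        have h1 := (hasDerivAt_pow 2 z).const_mul α
        have h2 := (hasDerivAt_id z).const_mul ξ
        have h3 := h1.add h2
        simp at h3
        exact h3
      exact this.cexp
    have hprod := ((hH.mul hE).const_mul ((-Complex.I) ^ k * s ^ k))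
    have hassoc : (fun z : ℂ => (-Complex.I) ^ k * s ^ k *
          Hc k (Complex.I * s * z + Complex.I * ξ / (2 * s)) *
          Complex.exp (α * z ^ 2 + ξ * z)) =
        (fun z : ℂ => (-Complex.I) ^ k * s ^ k *
          (Hc k (Complex.I * s * z + Complex.I * ξ / (2 * s)) *
          Complex.exp (α * z ^ 2 + ξ * z))) := by
      funext y; ring
    simp only [Pi.mul_def] at hprod
    rw [hassoc, hprod.deriv]
    rw [Hc_succ k (Complex.I * s * z + Complex.I * ξ / (2 * s))]
    rw [← hs]
    field_simp
    ring_nf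
    simp [Complex.I_sq]
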